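/- Let s ∈ (0,1) and set ψ_s(z) = (2^{1−s}/Γ(s)) z^s K_s(z) for z > 0. Then ψ_s is strictly decreasing on (0,∞), i.e. for all 0 < z₁ < z₂ it holds ψ_s(z₂) < ψ_s(z₁). -/

import Mathlib

/-- The modified Bessel function of the second kind,
`K_ν(z) = ∫₀^∞ exp(−z cosh t) cosh(ν t) dt`. -/
noncomputable def besselK (ν z : ℝ) : ℝ :=
  ∫ t in Set.Ioi (0:ℝ), Real.exp (-z * Real.cosh t) * Real.cosh (ν * t)

/-- `ψ_s(z) = (2^{1−s}/Γ(s)) z^s K_s(z)`. -/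
noncomputable def psi (s z : ℝ) : ℝ :=
  (2 ^ (1 - s) / Real.Gamma s) * z ^ s * besselK s z

open Real MeasureTheory Set

namespace PsiAux

/-- `gg s z w = exp(-(w + z²/w)/2) * w^(s-1)`. -/
noncomputable def gg (s z w : ℝ) : ℝ := Real.exp (-((w + z ^ 2 / w) / 2)) * w ^ (s - 1)

/-- `hh s z u = exp(-(z/2)(u + 1/u)) * u^(s-1)`. -/
noncomputable def hh (s z u : ℝ) : ℝ := Real.exp (-(z / 2 * (u + u⁻¹))) * u ^ (s - 1)

lemma gg_meas (s z : ℝ) : Measurable (gg s z) := by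
  unfold gg
  fun_prop

lemma base_integrable {s : ℝ} (hs : 0 < s) :
    IntegrableOn (fun w : ℝ => Real.exp (-(w / 2)) * w ^ (s - 1)) (Ioi 0) := by
  have h0 := Real.GammaIntegral_convergent hs
  have h1 : IntegrableOn (fun x : ℝ => Real.exp (-((2:ℝ)⁻¹ * x)) * ((2:ℝ)⁻¹ * x) ^ (s - 1))
      (Ioi 0) := by
    have := (integrableOn_Ioi_comp_mul_left_iff
      (fun x : ℝ => Real.exp (-x) * x ^ (s - 1)) 0 (by norm_num : (0:ℝ) < 2⁻¹)).2
    simpa using this (by simpa using h0)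
  have h2 : IntegrableOn (fun x : ℝ => ((2:ℝ)⁻¹) ^ (s - 1) *
      (Real.exp (-(x / 2)) * x ^ (s - 1))) (Ioi 0) := by
    refine MeasureTheory.IntegrableOn.congr_fun h1 (fun x hx => ?_) measurableSet_Ioi
    rw [Real.mul_rpow (by norm_num : (0:ℝ) ≤ 2⁻¹) (le_of_lt hx)]
    ring_nf
  have h3 := h2.const_mul (((2:ℝ)⁻¹) ^ (s - 1))⁻¹
  refine MeasureTheory.IntegrableOn.congr_fun h3 (fun x _ => ?_) measurableSet_Ioi
  have hne : ((2:ℝ)⁻¹) ^ (s - 1) ≠ 0 := (Real.rpow_pos_of_pos (by norm_num) _).ne'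
  field_simp

lemma gg_integrable {s : ℝ} (hs : 0 < s) (z : ℝ) :
    IntegrableOn (gg s z) (Ioi 0) := by
  refine (base_integrable hs).mono' (gg_meas s z).aestronglyMeasurable ?_
  rw [ae_restrict_iff' measurableSet_Ioi]
  refine ae_of_all _ fun w hw => ?_
  have hw : (0:ℝ) < w := hw
  have hrp : (0:ℝ) ≤ w ^ (s - 1) := (Real.rpow_pos_of_pos hw _).le
  rw [gg, norm_mul, Real.norm_eq_abs, Real.norm_eq_abs, abs_of_pos (Real.exp_pos _),
    abs_of_nonneg hrp]
  have hexp : Real.exp (-((w + z ^ 2 / w) / 2)) ≤ Real.exp (-(w / 2)) := by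
    apply Real.exp_le_exp.2
    have : 0 ≤ z ^ 2 / w := div_nonneg (sq_nonneg z) hw.le
    linarith
  exact mul_le_mul_of_nonneg_right hexp hrp

lemma hh_eq_gg {s z : ℝ} (hz : 0 < z) {u : ℝ} (hu : 0 < u) :
    hh s z u = z ^ (1 - s) * gg s z (z * u) := by
  rw [hh, gg]
  have h1 : z ^ 2 / (z * u) = z * u⁻¹ := by
    field_simp
  rw [h1]
  have h2 : (z * u + z * u⁻¹) / 2 = z / 2 * (u + u⁻¹) := by ring
  rw [h2]
  rw [Real.mul_rpow hz.le hu.le]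
  have h3 : z ^ (1 - s) * (Real.exp (-(z / 2 * (u + u⁻¹))) * (z ^ (s - 1) * u ^ (s - 1)))
      = (z ^ (1 - s) * z ^ (s - 1)) * (Real.exp (-(z / 2 * (u + u⁻¹))) * u ^ (s - 1)) := by
    ring
  rw [h3, ← Real.rpow_add hz]
  norm_num

lemma hh_integrable {s : ℝ} (hs : 0 < s) {z : ℝ} (hz : 0 < z) :
    IntegrableOn (hh s z) (Ioi 0) := by
  have h1 : IntegrableOn (fun u => gg s z (z * u)) (Ioi 0) := by
    have := (integrableOn_Ioi_comp_mul_left_iff (gg s z) 0 hz).2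
    simpa using this (by simpa using gg_integrable hs z)
  refine MeasureTheory.IntegrableOn.congr_fun (h1.const_mul (z ^ (1 - s)))
    (fun u hu => (hh_eq_gg hz hu).symm) measurableSet_Ioi

lemma exp_image : Real.exp '' Ioi (0:ℝ) = Ioi 1 := by
  ext x
  constructor
  · rintro ⟨t, ht, rfl⟩
    have : Real.exp 0 < Real.exp t := Real.exp_lt_exp.2 ht
    simpa using this
  · intro hx
    have hx : (1:ℝ) < x := hx
    exact ⟨Real.log x, Real.log_pos hx, Real.exp_log (by linarith)⟩

lemma exp_neg_image : (fun t => Real.exp (-t)) '' Ioi (0:ℝ) = Ioo 0 1 := by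
  ext x
  constructor
  · rintro ⟨t, ht, rfl⟩
    refine ⟨Real.exp_pos _, ?_⟩
    have : Real.exp (-t) < Real.exp 0 := Real.exp_lt_exp.2 (by simpa using ht)
    simpa using this
  · rintro ⟨hx0, hx1⟩
    refine ⟨-Real.log x, ?_, by simp [Real.exp_log hx0]⟩
    simpa using Real.log_neg hx0 hx1

lemma exp_deriv_within : ∀ t ∈ Ioi (0:ℝ),
    HasDerivWithinAt Real.exp (Real.exp t) (Ioi 0) t :=
  fun t _ => (Real.hasDerivAt_exp t).hasDerivWithinAt

lemma exp_neg_deriv_within : ∀ t ∈ Ioi (0:ℝ),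
    HasDerivWithinAt (fun t => Real.exp (-t)) (-Real.exp (-t)) (Ioi 0) t := by
  intro t _
  have h : HasDerivAt (fun t : ℝ => Real.exp (-t)) (Real.exp (-t) * (-1)) t :=
    (Real.hasDerivAt_exp (-t)).comp t ((hasDerivAt_id t).neg)
  simpa using h.hasDerivWithinAt

lemma f1_eq (s z t : ℝ) :
    |Real.exp t| • hh s z (Real.exp t) = Real.exp (-z * Real.cosh t) * Real.exp (s * t) := by
  rw [abs_of_pos (Real.exp_pos t), smul_eq_mul, hh, ← Real.exp_neg,
    Real.rpow_def_of_pos (Real.exp_pos t), Real.log_exp, Real.cosh_eq]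
  rw [show Real.exp t * (Real.exp (-(z / 2 * (Real.exp t + Real.exp (-t)))) *
      Real.exp (t * (s - 1))) = Real.exp (t + (-(z / 2 * (Real.exp t + Real.exp (-t))) +
      t * (s - 1))) by rw [Real.exp_add, Real.exp_add]]
  rw [← Real.exp_add]
  congr 1
  ring

lemma f2_eq (s z t : ℝ) :
    |-Real.exp (-t)| • hh s z (Real.exp (-t))
      = Real.exp (-z * Real.cosh t) * Real.exp (-(s * t)) := by
  rw [abs_neg, abs_of_pos (Real.exp_pos (-t)), smul_eq_mul, hh, ← Real.exp_neg, neg_neg,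
    Real.rpow_def_of_pos (Real.exp_pos (-t)), Real.log_exp, Real.cosh_eq]
  rw [show Real.exp (-t) * (Real.exp (-(z / 2 * (Real.exp (-t) + Real.exp t))) *
      Real.exp (-t * (s - 1))) = Real.exp (-t + (-(z / 2 * (Real.exp (-t) + Real.exp t)) +
      -t * (s - 1))) by rw [Real.exp_add, Real.exp_add]]
  rw [← Real.exp_add]
  congr 1
  ring

lemma exp_injOn : InjOn Real.exp (Ioi (0:ℝ)) := Real.exp_injective.injOn

lemma exp_neg_injOn : InjOn (fun t => Real.exp (-t)) (Ioi (0:ℝ)) :=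
  (Real.exp_injective.comp neg_injective).injOn

/-- Substitution `u = e^t`. -/
lemma int1 (s z : ℝ) :
    ∫ u in Ioi (1:ℝ), hh s z u
      = ∫ t in Ioi (0:ℝ), Real.exp (-z * Real.cosh t) * Real.exp (s * t) := by
  rw [← exp_image, integral_image_eq_integral_abs_deriv_smul measurableSet_Ioi
    exp_deriv_within exp_injOn (hh s z)]
  exact setIntegral_congr_fun measurableSet_Ioi fun t _ => f1_eq s z t

/-- Substitution `u = e^{-t}`. -/
lemma int2 (s z : ℝ) :
    ∫ u in Ioo (0:ℝ) 1, hh s z u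
      = ∫ t in Ioi (0:ℝ), Real.exp (-z * Real.cosh t) * Real.exp (-(s * t)) := by
  rw [← exp_neg_image, integral_image_eq_integral_abs_deriv_smul measurableSet_Ioi
    exp_neg_deriv_within exp_neg_injOn (hh s z)]
  exact setIntegral_congr_fun measurableSet_Ioi fun t _ => f2_eq s z t

lemma f1_integrable {s : ℝ} (hs : 0 < s) {z : ℝ} (hz : 0 < z) :
    IntegrableOn (fun t => Real.exp (-z * Real.cosh t) * Real.exp (s * t)) (Ioi 0) := by
  have h1 : IntegrableOn (hh s z) (Real.exp '' Ioi 0) := by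
    rw [exp_image]
    exact (hh_integrable hs hz).mono_set (Ioi_subset_Ioi (by norm_num))
  have h2 := (integrableOn_image_iff_integrableOn_abs_deriv_smul measurableSet_Ioi
    exp_deriv_within exp_injOn (hh s z)).1 h1
  exact h2.congr_fun (fun t _ => f1_eq s z t) measurableSet_Ioi

lemma f2_integrable {s : ℝ} (hs : 0 < s) {z : ℝ} (hz : 0 < z) :
    IntegrableOn (fun t => Real.exp (-z * Real.cosh t) * Real.exp (-(s * t))) (Ioi 0) := by
  have h1 : IntegrableOn (hh s z) ((fun t => Real.exp (-t)) '' Ioi 0) := by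
    rw [exp_neg_image]
    exact (hh_integrable hs hz).mono_set Ioo_subset_Ioi_self
  have h2 := (integrableOn_image_iff_integrableOn_abs_deriv_smul measurableSet_Ioi
    exp_neg_deriv_within exp_neg_injOn (hh s z)).1 h1
  exact h2.congr_fun (fun t _ => f2_eq s z t) measurableSet_Ioi

/-- `K_s(z) = (1/2) ∫₀^∞ hh s z u du`. -/
lemma besselK_eq {s : ℝ} (hs : 0 < s) {z : ℝ} (hz : 0 < z) :
    besselK s z = (1 / 2) * ∫ u in Ioi (0:ℝ), hh s z u := by
  have hsplit : (∫ u in Ioi (0:ℝ), hh s z u)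
      = (∫ u in Ioo (0:ℝ) 1, hh s z u) + ∫ u in Ioi (1:ℝ), hh s z u := by
    have h1 : (∫ u in Ioi (0:ℝ), hh s z u)
        = ∫ u in Ioc (0:ℝ) 1 ∪ Ioi 1, hh s z u := by
      rw [Ioc_union_Ioi_eq_Ioi (by norm_num : (0:ℝ) ≤ 1)]
    rw [h1, setIntegral_union (Ioc_disjoint_Ioi le_rfl) measurableSet_Ioi
      ((hh_integrable hs hz).mono_set Ioc_subset_Ioi_self)
      ((hh_integrable hs hz).mono_set (Ioi_subset_Ioi (by norm_num)))]
    congr 1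
    exact setIntegral_congr_set Ioo_ae_eq_Ioc.symm
  rw [hsplit, int1, int2, besselK]
  rw [← integral_add (f2_integrable hs hz) (f1_integrable hs hz)]
  rw [show ((1:ℝ)/2) * ∫ t in Ioi (0:ℝ), (Real.exp (-z * Real.cosh t) * Real.exp (-(s * t))
      + Real.exp (-z * Real.cosh t) * Real.exp (s * t))
      = ∫ t in Ioi (0:ℝ), (1/2 : ℝ) * (Real.exp (-z * Real.cosh t) * Real.exp (-(s * t))
      + Real.exp (-z * Real.cosh t) * Real.exp (s * t)) from (integral_const_mul _ _).symm]
  refine setIntegral_congr_fun measurableSet_Ioi fun t _ => ?_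
  rw [Real.cosh_eq, Real.cosh_eq]
  ring

/-- The key representation: `z^s K_s(z) = (1/2) ∫₀^∞ e^{-(w+z²/w)/2} w^{s-1} dw`. -/
lemma key {s : ℝ} (hs : 0 < s) {z : ℝ} (hz : 0 < z) :
    z ^ s * besselK s z = (1 / 2) * ∫ w in Ioi (0:ℝ), gg s z w := by
  rw [besselK_eq hs hz]
  have h1 : (∫ u in Ioi (0:ℝ), hh s z u)
      = z ^ (1 - s) * ∫ u in Ioi (0:ℝ), gg s z (z * u) := by
    rw [← integral_const_mul]
    exact setIntegral_congr_fun measurableSet_Ioi fun u hu => hh_eq_gg hz hu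
  have h2 : (∫ u in Ioi (0:ℝ), gg s z (z * u)) = z⁻¹ * ∫ w in Ioi (0:ℝ), gg s z w := by
    have := integral_comp_mul_left_Ioi (gg s z) 0 hz
    simpa [smul_eq_mul] using this
  rw [h1, h2]
  have h3 : z ^ s * (1 / 2 * (z ^ (1 - s) * (z⁻¹ * ∫ w in Ioi (0:ℝ), gg s z w)))
      = (z ^ s * z ^ (1 - s) * z⁻¹) * (1 / 2 * ∫ w in Ioi (0:ℝ), gg s z w) := by ring
  rw [h3, ← Real.rpow_add hz]
  norm_num
  rw [mul_inv_cancel₀ hz.ne']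
  ring

end PsiAux

open PsiAux in
/-- `ψ_s` is strictly decreasing on `(0,∞)`. -/
theorem psi_strictAnti (s : ℝ) (hs : s ∈ Set.Ioo (0:ℝ) 1) :
    ∀ z₁ z₂ : ℝ, 0 < z₁ → z₁ < z₂ → psi s z₂ < psi s z₁ := by
  intro z₁ z₂ h1 h12
  have h2 : 0 < z₂ := h1.trans h12
  have hint1 := gg_integrable hs.1 z₁
  have hint2 := gg_integrable hs.1 z₂
  -- pointwise strict inequality
  have hpt : ∀ w ∈ Ioi (0:ℝ), gg s z₂ w < gg s z₁ w := by
    intro w hw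
    have hw : (0:ℝ) < w := hw
    have hsq : z₁ ^ 2 < z₂ ^ 2 := by nlinarith
    have hexp : Real.exp (-((w + z₂ ^ 2 / w) / 2)) < Real.exp (-((w + z₁ ^ 2 / w) / 2)) := by
      apply Real.exp_lt_exp.2
      have : z₁ ^ 2 / w < z₂ ^ 2 / w := div_lt_div_of_pos_right hsq hw
      linarith
    exact mul_lt_mul_of_pos_right hexp (Real.rpow_pos_of_pos hw _)
  -- integral strict inequality
  have hFlt : (∫ w in Ioi (0:ℝ), gg s z₂ w) < ∫ w in Ioi (0:ℝ), gg s z₁ w := by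
    have hpos : 0 < ∫ w in Ioi (0:ℝ), (gg s z₁ w - gg s z₂ w) := by
      rw [setIntegral_pos_iff_support_of_nonneg_ae]
      · have hsub : Ioi (0:ℝ) ⊆ Function.support fun w => gg s z₁ w - gg s z₂ w := by
          intro w hw
          exact (sub_pos.2 (hpt w hw)).ne'
        rw [Set.inter_eq_right.2 hsub, Real.volume_Ioi]
        simp
      · filter_upwards [ae_restrict_mem measurableSet_Ioi] with w hw
        exact (sub_pos.2 (hpt w hw)).le
      · exact hint1.sub hint2
    rw [integral_sub hint1 hint2] at hpos
    linarith
  have hkey1 := key hs.1 h1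
  have hkey2 := key hs.1 h2
  have hc : (0:ℝ) < 2 ^ (1 - s) / Real.Gamma s :=
    div_pos (Real.rpow_pos_of_pos (by norm_num) _) (Real.Gamma_pos_of_pos hs.1)
  have e1 : psi s z₁ = (2 ^ (1 - s) / Real.Gamma s) * (1 / 2)
      * ∫ w in Ioi (0:ℝ), gg s z₁ w := by
    rw [psi, mul_assoc, hkey1]; ring
  have e2 : psi s z₂ = (2 ^ (1 - s) / Real.Gamma s) * (1 / 2)
      * ∫ w in Ioi (0:ℝ), gg s z₂ w := by
    rw [psi, mul_assoc, hkey2]; ring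
  rw [e1, e2]
  exact mul_lt_mul_of_pos_left hFlt (by positivity)
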